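/- Let d ≥ 1, l ∈ ℤ, and let B be a bounded subset of 𝓗_l(ℝ^d). For ρ ∈ B and n ≥ 1 define π_{ρ,n}(t,x,y) = (1/n) Σ_{k ≥ 1, k/n < t} ρ(k/n, t, x, y) for t ∈ (0,1] and x, y ∈ ℝ^d. Then {π_{ρ,n} : ρ ∈ B, n ≥ 1} is a bounded subset of 𝒢_{l−2}(ℝ^d): each π_{ρ,n}(t,·,·) is infinitely differentiable, and for every pair of multi-indices α, β ∈ ℕ^d there exist c₁ ≥ 0 and c₂ > 0, independent of ρ ∈ B and n ≥ 1, such that |∂_x^α ∂_y^β π_{ρ,n}(t,x,y)| ≤ c₁ t^{−(|α|+|β|+d+l−2)/2} exp(−c₂‖x−y‖²/t) for all t ∈ (0,1] and x, y ∈ ℝ^d. -/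

import Mathlib

open MeasureTheory Real

noncomputable section

/-- `ℝ^d` with the Euclidean norm. -/
abbrev Eu (d : ℕ) := EuclideanSpace ℝ (Fin d)

/-- Iterated partial derivative along a list of coordinate directions. -/
noncomputable def pderivs {d : ℕ} : List (Fin d) → (Eu d → ℝ) → Eu d → ℝ
  | [], f => f
  | i :: l, f => pderivs l fun x => fderiv ℝ f x (EuclideanSpace.single i 1)

/-- The list of coordinates (with multiplicities) associated to a multi-index `m : ℕ^d`. -/
def mToList {d : ℕ} (m : Fin d → ℕ) : List (Fin d) :=
  (List.finRange d).flatMap fun i => List.replicate (m i) i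

/-- The partial derivative `∂^m` associated to a multi-index `m : ℕ^d`. -/
noncomputable def pderivM {d : ℕ} (m : Fin d → ℕ) (f : Eu d → ℝ) : Eu d → ℝ :=
  pderivs (mToList m) f

/-- The length `|m| = m₁ + ⋯ + m_d` of a multi-index. -/
def mlen {d : ℕ} (m : Fin d → ℕ) : ℕ := ∑ i, m i

/-- Mixed partial derivative `∂_x^α ∂_y^β f(x,y)` of a function of two `ℝ^d` variables. -/
noncomputable def D2 {d : ℕ} (α β : Fin d → ℕ) (f : Eu d → Eu d → ℝ) (x y : Eu d) : ℝ :=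
  pderivM α (fun x' => pderivM β (f x') y) x

/-- The Riemann sum `π_{ρ,n}(t,x,y) = (1/n) Σ_{k ≥ 1, k/n < t} ρ(k/n,t,x,y)`. -/
noncomputable def riemannSum {d : ℕ} (ρ : ℝ → ℝ → Eu d → Eu d → ℝ) (n : ℕ)
    (t : ℝ) (x y : Eu d) : ℝ :=
  (1 / (n : ℝ)) * ∑ k ∈ Finset.Ioc 0 n, if (k : ℝ) / n < t then ρ ((k : ℝ) / n) t x y else 0

/-- Riemann sums `(1/n) Σ_{k/n < t} ρ(k/n,t,·,·)` over a bounded subset of `𝓗_l(ℝ^d)` form a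
bounded subset of `𝒢_{l-2}(ℝ^d)`, uniformly in `n ≥ 1`. -/
lemma pderiv1_contDiff {d : ℕ} (i : Fin d) {f : Eu d → ℝ} (hf : ContDiff ℝ (⊤:ℕ∞) f) :
    ContDiff ℝ (⊤:ℕ∞) fun x => fderiv ℝ f x (EuclideanSpace.single i 1) :=
  (hf.fderiv_right (by exact_mod_cast le_top)).clm_apply contDiff_const

lemma pderivs_const_mul_sum {d : ℕ} (L : List (Fin d)) {ι : Type*} (s : Finset ι)
    (f : ι → Eu d → ℝ) (c : ℝ) (hf : ∀ k ∈ s, ContDiff ℝ (⊤:ℕ∞) (f k)) (x : Eu d) :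
    pderivs L (fun x => c * ∑ k ∈ s, f k x) x = c * ∑ k ∈ s, pderivs L (f k) x := by
  induction L generalizing f with
  | nil => rfl
  | cons i L ih =>
    show pderivs L _ x = _
    have heq : (fun x => fderiv ℝ (fun x => c * ∑ k ∈ s, f k x) x (EuclideanSpace.single i 1))
        = fun x => c * ∑ k ∈ s, (fun x => fderiv ℝ (f k) x (EuclideanSpace.single i 1)) x := by
      funext z
      rw [fderiv_const_mul (by
        exact (DifferentiableAt.fun_sum fun k hk =>
          ((hf k hk).differentiable (by simp)).differentiableAt)),
        fderiv_fun_sum fun k hk =>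
          ((hf k hk).differentiable (by simp)).differentiableAt]
      simp
    rw [heq, ih _ (fun k hk => pderiv1_contDiff i (hf k hk))]
    rfl

/-- Joint smoothness of iterated partial derivatives in the second variable. -/
lemma contDiff_pderivs_snd {d : ℕ} (L : List (Fin d)) (H : Eu d × Eu d → ℝ)
    (hH : ContDiff ℝ (⊤:ℕ∞) H) :
    ContDiff ℝ (⊤:ℕ∞) (fun p : Eu d × Eu d => pderivs L (fun y => H (p.1, y)) p.2) := by
  induction L generalizing H with
  | nil => exact hH
  | cons i L ih =>
    set K : Eu d × Eu d → ℝ := fun p => fderiv ℝ H p (0, EuclideanSpace.single i 1) with hK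
    have hKsm : ContDiff ℝ (⊤:ℕ∞) K :=
      (hH.fderiv_right (by exact_mod_cast le_top)).clm_apply contDiff_const
    have key : ∀ p : Eu d × Eu d,
        pderivs (i :: L) (fun y => H (p.1, y)) p.2 = pderivs L (fun y => K (p.1, y)) p.2 := by
      intro p
      show pderivs L _ p.2 = _
      congr 1
      funext y
      have hcomp : HasFDerivAt (fun y' => H (p.1, y'))
          ((fderiv ℝ H (p.1, y)).comp (ContinuousLinearMap.inr ℝ (Eu d) (Eu d))) y :=
        ((hH.differentiable (by simp) (p.1, y)).hasFDerivAt).comp y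
          (hasFDerivAt_prodMk_right p.1 y)
      rw [hcomp.fderiv]
      rfl
    simp only [key]
    exact ih K hKsm

lemma D2_const_mul_sum {d : ℕ} (α β : Fin d → ℕ) {ι : Type*} (s : Finset ι)
    (F : ι → Eu d → Eu d → ℝ) (c : ℝ)
    (hF : ∀ k ∈ s, ContDiff ℝ (⊤:ℕ∞) fun p : Eu d × Eu d => F k p.1 p.2) (x y : Eu d) :
    D2 α β (fun x y => c * ∑ k ∈ s, F k x y) x y = c * ∑ k ∈ s, D2 α β (F k) x y := by
  unfold D2 pderivM
  have h1 : (fun x' => pderivs (mToList β) ((fun x y => c * ∑ k ∈ s, F k x y) x') y)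
      = fun x' => c * ∑ k ∈ s, (fun x'' => pderivs (mToList β) (F k x'') y) x' := by
    funext x'
    exact pderivs_const_mul_sum _ s (fun k => F k x') c
      (fun k hk => (hF k hk).comp (contDiff_const.prodMk contDiff_id)) y
  rw [h1]
  exact pderivs_const_mul_sum _ s _ c (fun k hk =>
    ((contDiff_pderivs_snd (mToList β) _ (hF k hk)).comp (contDiff_id.prodMk contDiff_const))) x

theorem statement11 (d : ℕ) (hd : 1 ≤ d) (l : ℤ)
    (B : Set (ℝ → ℝ → Eu d → Eu d → ℝ))
    (hmeas : ∀ ρ ∈ B, Measurable fun p : (ℝ × ℝ) × Eu d × Eu d => ρ p.1.1 p.1.2 p.2.1 p.2.2)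
    (hsm : ∀ ρ ∈ B, ∀ s t : ℝ, 0 < s → s < t → t ≤ 1 →
      ContDiff ℝ (⊤ : ℕ∞) fun p : Eu d × Eu d => ρ s t p.1 p.2)
    -- `B` is a bounded subset of `𝓗_l(ℝ^d)`
    (hb : ∀ α β : Fin d → ℕ, ∃ c₁ ≥ (0:ℝ), ∃ c₂ > (0:ℝ), ∀ ρ ∈ B,
      ∀ s t : ℝ, 0 < s → s < t → t ≤ 1 → ∀ x y : Eu d,
        |D2 α β (ρ s t) x y| ≤
          c₁ * t ^ (-(((mlen α + mlen β + d : ℕ) : ℝ) + (l : ℝ)) / 2) *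
            Real.exp (-c₂ * ‖x - y‖ ^ 2 / t)) :
    -- conclusion: `{π_{ρ,n} | ρ ∈ B, n ≥ 1}` is a bounded subset of `𝒢_{l-2}(ℝ^d)`
    (∀ ρ ∈ B, ∀ n : ℕ, 1 ≤ n → ∀ t ∈ Set.Ioc (0:ℝ) 1,
      ContDiff ℝ (⊤ : ℕ∞) fun p : Eu d × Eu d => riemannSum ρ n t p.1 p.2) ∧
    (∀ α β : Fin d → ℕ, ∃ c₁ ≥ (0:ℝ), ∃ c₂ > (0:ℝ), ∀ ρ ∈ B, ∀ n : ℕ, 1 ≤ n →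
      ∀ t ∈ Set.Ioc (0:ℝ) 1, ∀ x y : Eu d,
        |D2 α β (riemannSum ρ n t) x y| ≤
          c₁ * t ^ (-(((mlen α + mlen β + d : ℕ) : ℝ) + (l : ℝ) - 2) / 2) *
            Real.exp (-c₂ * ‖x - y‖ ^ 2 / t)) := by
  -- basic facts about the index set
  have hmem : ∀ (n : ℕ), 1 ≤ n → ∀ t ∈ Set.Ioc (0:ℝ) 1, ∀ k ∈ Finset.Ioc 0 n,
      (k:ℝ)/n < t → 0 < (k:ℝ)/n ∧ (k:ℝ)/n < t ∧ t ≤ 1 := by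
    intro n hn t ht k hk hkt
    have hn0 : (0:ℝ) < n := by exact_mod_cast hn
    have hk0 : 0 < k := (Finset.mem_Ioc.mp hk).1
    exact ⟨div_pos (by exact_mod_cast hk0) hn0, hkt, ht.2⟩
  constructor
  · intro ρ hρ n hn t ht
    unfold riemannSum
    refine contDiff_const.mul (ContDiff.sum fun k hk => ?_)
    by_cases h : (k:ℝ)/n < t
    · simp only [if_pos h]
      obtain ⟨h1, h2, h3⟩ := hmem n hn t ht k hk h
      exact hsm ρ hρ _ t h1 h2 h3
    · simp only [if_neg h]; exact contDiff_const
  · intro α β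
    obtain ⟨c₁, hc₁, c₂, hc₂, hbd⟩ := hb α β
    refine ⟨c₁, hc₁, c₂, hc₂, ?_⟩
    intro ρ hρ n hn t ht x y
    have ht0 : (0:ℝ) < t := ht.1
    have hn0 : (0:ℝ) < n := by exact_mod_cast hn
    set S := (Finset.Ioc 0 n).filter (fun k : ℕ => (k:ℝ)/(n:ℝ) < t) with hS
    have hrw : riemannSum ρ n t = fun x y => (1/(n:ℝ)) * ∑ k ∈ S, ρ ((k:ℝ)/n) t x y := by
      funext x y
      rw [riemannSum, hS, Finset.sum_filter]
    set M := c₁ * t ^ (-(((mlen α + mlen β + d : ℕ) : ℝ) + (l : ℝ)) / 2) *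
        Real.exp (-c₂ * ‖x - y‖ ^ 2 / t) with hM
    have hM0 : 0 ≤ M := by positivity
    have hsmk : ∀ k ∈ S, ContDiff ℝ (⊤:ℕ∞) fun p : Eu d × Eu d => ρ ((k:ℝ)/n) t p.1 p.2 := by
      intro k hk
      obtain ⟨hk1, hk2⟩ := Finset.mem_filter.mp hk
      obtain ⟨h1, h2, h3⟩ := hmem n hn t ht k hk1 hk2
      exact hsm ρ hρ _ t h1 h2 h3
    have hcard : (S.card : ℝ) ≤ n * t := by
      have hsub : S ⊆ Finset.Icc 1 (Nat.floor ((n:ℝ)*t)) := by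
        intro k hk
        obtain ⟨hk1, hk2⟩ := Finset.mem_filter.mp hk
        refine Finset.mem_Icc.mpr ⟨(Finset.mem_Ioc.mp hk1).1, Nat.le_floor ?_⟩
        have := (div_lt_iff₀ hn0).mp hk2
        linarith
      calc (S.card : ℝ) ≤ ((Finset.Icc 1 (Nat.floor ((n:ℝ)*t))).card : ℝ) := by
            exact_mod_cast Finset.card_le_card hsub
        _ = (Nat.floor ((n:ℝ)*t) : ℝ) := by rw [Nat.card_Icc]; simp
        _ ≤ n * t := Nat.floor_le (by positivity)
    calc |D2 α β (riemannSum ρ n t) x y|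
        = |(1/(n:ℝ)) * ∑ k ∈ S, D2 α β (ρ ((k:ℝ)/n) t) x y| := by
          rw [hrw, D2_const_mul_sum α β S _ _ hsmk]
      _ ≤ (1/(n:ℝ)) * ∑ k ∈ S, |D2 α β (ρ ((k:ℝ)/n) t) x y| := by
          rw [abs_mul, abs_of_nonneg (by positivity : (0:ℝ) ≤ 1/(n:ℝ))]
          exact mul_le_mul_of_nonneg_left (Finset.abs_sum_le_sum_abs _ _) (by positivity)
      _ ≤ (1/(n:ℝ)) * ∑ k ∈ S, M := by
          refine mul_le_mul_of_nonneg_left (Finset.sum_le_sum fun k hk => ?_) (by positivity)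
          obtain ⟨hk1, hk2⟩ := Finset.mem_filter.mp hk
          obtain ⟨h1, h2, h3⟩ := hmem n hn t ht k hk1 hk2
          exact hbd ρ hρ _ t h1 h2 h3 x y
      _ = (1/(n:ℝ)) * (S.card * M) := by rw [Finset.sum_const, nsmul_eq_mul]
      _ ≤ t * M := by
          rw [← mul_assoc]
          refine mul_le_mul_of_nonneg_right ?_ hM0
          rw [div_mul_eq_mul_div, one_mul, div_le_iff₀ hn0]
          linarith [hcard]
      _ = c₁ * t ^ (-(((mlen α + mlen β + d : ℕ) : ℝ) + (l : ℝ) - 2) / 2) *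
            Real.exp (-c₂ * ‖x - y‖ ^ 2 / t) := by
          rw [hM, show (-(((mlen α + mlen β + d : ℕ) : ℝ) + (l : ℝ) - 2) / 2)
              = (-(((mlen α + mlen β + d : ℕ) : ℝ) + (l : ℝ)) / 2) + 1 by ring,
            Real.rpow_add ht0, Real.rpow_one]
          ring
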